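/- If q* ∈ ℝ^r with nonnegative entries satisfies c(q*) + d = b(q*) = q*, then R(q*) equals the intersection of all sets in the family S = {R(q) : q ∈ ℝ^r, q ≥ 0, c(q) + d ≤ b(q) componentwise}; that is, R(q*) is the smallest member of the family of RPI sets representable with left-hand-side matrix P. -/
import Mathlib


open Matrix

/-- Support function `h(X, v) = sup {vᵀ x : x ∈ X}`. -/
noncomputable def suppFn {n : ℕ} (X : Set (Fin n → ℝ)) (v : Fin n → ℝ) : ℝ :=
  sSup ((fun x => v ⬝ᵥ x) '' X)

/-- `R(q) = {z : P z ≤ q}`. -/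
def Rset {n r : ℕ} (P : Matrix (Fin r) (Fin n) ℝ) (q : Fin r → ℝ) : Set (Fin n → ℝ) :=
  {z : Fin n → ℝ | P.mulVec z ≤ q}

/-- `b_i(q) = h(R(q), P_iᵀ)`. -/
noncomputable def bfun {n r : ℕ} (P : Matrix (Fin r) (Fin n) ℝ) (q : Fin r → ℝ) :
    Fin r → ℝ :=
  fun i => suppFn (Rset P q) (P i)

/-- `c_i(q) = h(A·R(q), P_iᵀ)`. -/
noncomputable def cfun {n r : ℕ} (A : Matrix (Fin n) (Fin n) ℝ)
    (P : Matrix (Fin r) (Fin n) ℝ) (q : Fin r → ℝ) : Fin r → ℝ :=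
  fun i => suppFn (A.mulVec '' Rset P q) (P i)

/-- `d_i = h(W, P_iᵀ)` where `W = {w : F w ≤ g}`. -/
noncomputable def dvec {n r p : ℕ} (F : Matrix (Fin p) (Fin n) ℝ) (g : Fin p → ℝ)
    (P : Matrix (Fin r) (Fin n) ℝ) : Fin r → ℝ :=
  fun i => suppFn {w : Fin n → ℝ | F.mulVec w ≤ g} (P i)

/-- `R` is robust positively invariant for `x⁺ = A x + w`, `w ∈ W`. -/
def IsRPI {n : ℕ} (A : Matrix (Fin n) (Fin n) ℝ) (W R : Set (Fin n → ℝ)) : Prop :=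
  ∀ x ∈ R, ∀ w ∈ W, A.mulVec x + w ∈ R

lemma zero_mem_Rset {n r : ℕ} {P : Matrix (Fin r) (Fin n) ℝ} {q : Fin r → ℝ}
    (hq : 0 ≤ q) : 0 ∈ Rset P q := by
  intro i
  simpa [Matrix.mulVec_zero] using hq i

lemma isBounded_Rset {n r : ℕ} {P : Matrix (Fin r) (Fin n) ℝ}
    (hP0 : {z : Fin n → ℝ | P.mulVec z ≤ 0} = {0}) (q : Fin r → ℝ) :
    Bornology.IsBounded (Rset P q) := by
  rcases Nat.eq_zero_or_pos n with hn | hn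
  · subst hn
    have hsub : Rset P q ⊆ {0} := by
      intro z _
      have : z = 0 := funext fun i => i.elim0
      simp [this]
    exact (Bornology.isBounded_singleton (x := (0 : Fin 0 → ℝ))).subset hsub
  · haveI : Nonempty (Fin n) := ⟨⟨0, hn⟩⟩
    -- positive-part max function
    set f : (Fin n → ℝ) → ℝ := fun z => ‖fun i => max (P.mulVec z i) 0‖ with hf
    have hfcont : Continuous f := by
      apply Continuous.norm
      apply continuous_pi
      intro i
      have h1 : Continuous fun z : Fin n → ℝ => P.mulVec z i := by
        have := (Matrix.mulVecLin P).continuous_of_finiteDimensional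
        exact (continuous_apply i).comp this
      exact h1.max continuous_const
    have hfpos : ∀ z : Fin n → ℝ, z ≠ 0 → 0 < f z := by
      intro z hz
      have hnot : ¬ P.mulVec z ≤ 0 := by
        intro h
        have : z ∈ ({0} : Set (Fin n → ℝ)) := hP0 ▸ h
        exact hz this
      rw [Pi.le_def] at hnot
      push_neg at hnot
      obtain ⟨i, hi⟩ := hnot
      have : P.mulVec z i ≤ |max (P.mulVec z i) 0| := le_trans (le_max_left _ _) (le_abs_self _)
      calc (0:ℝ) < P.mulVec z i := by simpa using hi
        _ ≤ |max (P.mulVec z i) 0| := this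
        _ ≤ f z := by
          simpa [hf, Real.norm_eq_abs] using norm_le_pi_norm (fun i => max (P.mulVec z i) 0) i
    have hfhomog : ∀ (t : ℝ), 0 ≤ t → ∀ z, f (t • z) = t * f z := by
      intro t ht z
      have : (fun i => max (P.mulVec (t • z) i) 0) = t • fun i => max (P.mulVec z i) 0 := by
        funext i
        rw [Matrix.mulVec_smul]
        simp only [Pi.smul_apply, smul_eq_mul]
        rcases le_or_gt (P.mulVec z i) 0 with h | h
        · rw [max_eq_right h, max_eq_right (by nlinarith), mul_zero]
        · rw [max_eq_left h.le, max_eq_left (by nlinarith)]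
      rw [hf]
      simp only [this, norm_smul, Real.norm_eq_abs, abs_of_nonneg ht]
    -- min on sphere
    obtain ⟨z0, hz0mem, hz0min⟩ := (isCompact_sphere (0 : Fin n → ℝ) 1).exists_isMinOn
      (NormedSpace.sphere_nonempty.2 zero_le_one) hfcont.continuousOn
    have hz0ne : z0 ≠ 0 := by
      intro h
      have := mem_sphere_zero_iff_norm.1 hz0mem
      rw [h, norm_zero] at this; exact one_ne_zero this.symm
    set m := f z0 with hm
    have hmpos : 0 < m := hfpos z0 hz0ne
    -- bound f on Rset
    have hub : ∀ z ∈ Rset P q, f z ≤ ‖q‖ := by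
      intro z hz
      rw [hf]
      apply pi_norm_le_iff_of_nonneg (norm_nonneg q) |>.2
      intro i
      rw [Real.norm_eq_abs, abs_of_nonneg (le_max_right _ _)]
      rcases le_or_gt (P.mulVec z i) 0 with h | h
      · rw [max_eq_right h]; exact norm_nonneg q
      · rw [max_eq_left h.le]
        exact le_trans (hz i) (le_trans (le_abs_self _) (norm_le_pi_norm q i))
    -- conclude
    have : Rset P q ⊆ Metric.closedBall 0 (‖q‖ / m) := by
      intro z hz
      rcases eq_or_ne z 0 with rfl | hzne
      · simp [Metric.mem_closedBall]
        positivity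
      · have hnz : 0 < ‖z‖ := norm_pos_iff.2 hzne
        have hsph : (‖z‖⁻¹ • z) ∈ Metric.sphere (0 : Fin n → ℝ) 1 := by
          simp [norm_smul, abs_of_nonneg (inv_nonneg.2 hnz.le), inv_mul_cancel₀ hnz.ne']
        have h1 : m ≤ f (‖z‖⁻¹ • z) := hz0min hsph
        have h2 : f (‖z‖⁻¹ • z) = ‖z‖⁻¹ * f z := hfhomog _ (inv_nonneg.2 hnz.le) z
        have h3 : m * ‖z‖ ≤ f z := by
          rw [h2] at h1
          calc m * ‖z‖ ≤ (‖z‖⁻¹ * f z) * ‖z‖ := by nlinarith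
            _ = f z := by field_simp
        have := le_trans h3 (hub z hz)
        rw [Metric.mem_closedBall, dist_zero_right]
        rw [le_div_iff₀ hmpos]
        nlinarith
    exact (Metric.isBounded_closedBall).subset this

lemma isCompact_Rset {n r : ℕ} {P : Matrix (Fin r) (Fin n) ℝ}
    (hP0 : {z : Fin n → ℝ | P.mulVec z ≤ 0} = {0}) (q : Fin r → ℝ) :
    IsCompact (Rset P q) := by
  have hclosed : IsClosed (Rset P q) := by
    have : Rset P q = ⋂ i, {z : Fin n → ℝ | P.mulVec z i ≤ q i} := by
      ext z; simp [Rset, Pi.le_def, Set.mem_iInter]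
    rw [this]
    apply isClosed_iInter
    intro i
    have h1 : Continuous fun z : Fin n → ℝ => P.mulVec z i :=
      (continuous_apply i).comp (Matrix.mulVecLin P).continuous_of_finiteDimensional
    exact isClosed_le h1 continuous_const
  exact Metric.isCompact_of_isClosed_isBounded hclosed (isBounded_Rset hP0 q)

-- continuity of dot products
lemma continuous_dot {n : ℕ} (v : Fin n → ℝ) : Continuous fun x : Fin n → ℝ => v ⬝ᵥ x := by
  unfold dotProduct
  exact continuous_finset_sum _ fun j _ => continuous_const.mul (continuous_apply j)

lemma bddAbove_dot_image {n : ℕ} {S : Set (Fin n → ℝ)} (hS : IsCompact S) (v : Fin n → ℝ) :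
    BddAbove ((fun x => v ⬝ᵥ x) '' S) :=
  (hS.image (continuous_dot v)).bddAbove

lemma cfun_image {n r : ℕ} (A : Matrix (Fin n) (Fin n) ℝ) (P : Matrix (Fin r) (Fin n) ℝ)
    (q : Fin r → ℝ) (i : Fin r) :
    cfun A P q i = sSup ((fun x => P i ⬝ᵥ A.mulVec x) '' Rset P q) := by
  unfold cfun suppFn
  rw [Set.image_image]

lemma bddAbove_cimage {n r : ℕ} (A : Matrix (Fin n) (Fin n) ℝ) {P : Matrix (Fin r) (Fin n) ℝ}
    (hP0 : {z : Fin n → ℝ | P.mulVec z ≤ 0} = {0}) (q : Fin r → ℝ) (i : Fin r) :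
    BddAbove ((fun x => P i ⬝ᵥ A.mulVec x) '' Rset P q) := by
  have hcont : Continuous fun x : Fin n → ℝ => P i ⬝ᵥ A.mulVec x :=
    (continuous_dot (P i)).comp (Matrix.mulVecLin A).continuous_of_finiteDimensional
  exact ((isCompact_Rset hP0 q).image hcont).bddAbove

lemma cfun_nonneg {n r : ℕ} (A : Matrix (Fin n) (Fin n) ℝ) {P : Matrix (Fin r) (Fin n) ℝ}
    (hP0 : {z : Fin n → ℝ | P.mulVec z ≤ 0} = {0}) {q : Fin r → ℝ} (hq : 0 ≤ q) (i : Fin r) :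
    0 ≤ cfun A P q i := by
  rw [cfun_image]
  apply le_csSup (bddAbove_cimage A hP0 q i)
  exact ⟨0, zero_mem_Rset hq, by simp⟩

lemma bfun_le {n r : ℕ} (P : Matrix (Fin r) (Fin n) ℝ) {q : Fin r → ℝ} (hq : 0 ≤ q) :
    bfun P q ≤ q := by
  intro i
  apply Real.sSup_le _ (hq i)
  rintro y ⟨x, hx, rfl⟩
  exact hx i

-- positivity of dvec
lemma dvec_pos {n r p : ℕ} {F : Matrix (Fin p) (Fin n) ℝ} {g : Fin p → ℝ}
    (hg : ∀ j, 0 < g j) (hW : IsCompact {w : Fin n → ℝ | F.mulVec w ≤ g})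
    {P : Matrix (Fin r) (Fin n) ℝ} {i : Fin r} (hPi : P i ≠ 0) :
    0 < dvec F g P i := by
  set v := P i with hv
  have hvv : 0 < v ⬝ᵥ v := by
    have h0 : (0:ℝ) ≤ v ⬝ᵥ v := Finset.sum_nonneg fun j _ => mul_self_nonneg _
    have hne : v ⬝ᵥ v ≠ 0 := fun h => hPi (dotProduct_self_eq_zero.1 h)
    exact lt_of_le_of_ne h0 (Ne.symm hne)
  obtain ⟨w, hwW, hwdot⟩ : ∃ w, F.mulVec w ≤ g ∧ 0 < v ⬝ᵥ w := by
    rcases isEmpty_or_nonempty (Fin p) with hp | hp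
    · exact ⟨v, fun j => isEmptyElim j, hvv⟩
    · set u := F.mulVec v with hu
      set t := Finset.univ.inf' Finset.univ_nonempty (fun j => g j / max (u j) 1) with ht
      have htpos : 0 < t := by
        rw [ht, Finset.lt_inf'_iff]
        intro j _
        exact div_pos (hg j) (lt_of_lt_of_le one_pos (le_max_right _ _))
      refine ⟨t • v, ?_, ?_⟩
      · intro j
        have hle : t ≤ g j / max (u j) 1 := Finset.inf'_le _ (Finset.mem_univ j)
        have : F.mulVec (t • v) j = t * u j := by
          rw [Matrix.mulVec_smul]; simp [hu]
        rw [this]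
        rcases le_or_gt (u j) 0 with h | h
        · nlinarith [hg j]
        · rcases le_or_gt (u j) 1 with h1 | h1
          · rw [max_eq_right h1] at hle
            nlinarith
          · rw [max_eq_left h1.le] at hle
            calc t * u j ≤ (g j / u j) * u j := mul_le_mul_of_nonneg_right hle h.le
              _ = g j := div_mul_cancel₀ _ (ne_of_gt h)
      · rw [dotProduct_smul]
        simpa using mul_pos htpos hvv
  have : v ⬝ᵥ w ≤ dvec F g P i := by
    apply le_csSup (bddAbove_dot_image hW v)
    exact ⟨w, hwW, rfl⟩
  linarith

lemma dvec_nonneg {n r p : ℕ} {F : Matrix (Fin p) (Fin n) ℝ} {g : Fin p → ℝ}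
    (hg : ∀ j, 0 < g j) (hW : IsCompact {w : Fin n → ℝ | F.mulVec w ≤ g})
    (P : Matrix (Fin r) (Fin n) ℝ) (i : Fin r) : 0 ≤ dvec F g P i := by
  apply le_csSup (bddAbove_dot_image hW (P i))
  exact ⟨0, fun j => by simpa [Matrix.mulVec_zero] using (hg j).le, by simp⟩

lemma key_le {n r p : ℕ}
    (A : Matrix (Fin n) (Fin n) ℝ)
    (F : Matrix (Fin p) (Fin n) ℝ) (g : Fin p → ℝ)
    (hg : ∀ j, 0 < g j)
    (hWcompact : IsCompact {w : Fin n → ℝ | F.mulVec w ≤ g})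
    (P : Matrix (Fin r) (Fin n) ℝ)
    (hP0 : {z : Fin n → ℝ | P.mulVec z ≤ 0} = {0})
    (qs : Fin r → ℝ) (hqs : 0 ≤ qs)
    (hfix : cfun A P qs + dvec F g P = bfun P qs ∧ bfun P qs = qs)
    (q : Fin r → ℝ) (hq0 : 0 ≤ q)
    (hS : cfun A P q + dvec F g P ≤ bfun P q) : qs ≤ q := by
  have hfixpt : ∀ i, cfun A P qs i + dvec F g P i = qs i := by
    intro i
    have := congrFun (hfix.1.trans hfix.2) i
    simpa using this
  rcases isEmpty_or_nonempty (Fin r) with hr | hr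
  · exact fun i => isEmptyElim i
  haveI := hr
  set ratio : Fin r → ℝ := fun i => if 0 < qs i then q i / qs i else 1 with hratio
  set lam := Finset.univ.inf' Finset.univ_nonempty ratio with hlam
  have hlam0 : 0 ≤ lam := by
    rw [hlam]
    apply Finset.le_inf'
    intro i _
    rw [hratio]
    by_cases h : 0 < qs i
    · simp only [if_pos h]
      exact div_nonneg (hq0 i) h.le
    · simp [if_neg h]
  have hlamq : ∀ i, lam * qs i ≤ q i := by
    intro i
    by_cases h : 0 < qs i
    · have h1 : lam ≤ q i / qs i := by
        have := Finset.inf'_le ratio (Finset.mem_univ i)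
        rw [← hlam] at this
        simpa [hratio, if_pos h] using this
      exact (le_div_iff₀ h).1 h1
    · have : qs i = 0 := le_antisymm (not_lt.1 h) (hqs i)
      rw [this, mul_zero]; exact hq0 i
  by_cases hlam1 : 1 ≤ lam
  · intro i
    calc qs i = 1 * qs i := (one_mul _).symm
      _ ≤ lam * qs i := mul_le_mul_of_nonneg_right hlam1 (hqs i)
      _ ≤ q i := hlamq i
  · exfalso
    push_neg at hlam1
    obtain ⟨i0, _, hi0⟩ := Finset.exists_mem_eq_inf' (Finset.univ_nonempty) ratio
    rw [← hlam] at hi0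
    have hi0' : lam = if 0 < qs i0 then q i0 / qs i0 else 1 := hi0
    have hqs_pos : 0 < qs i0 := by
      by_contra h
      rw [if_neg h] at hi0'
      rw [hi0'] at hlam1; exact lt_irrefl 1 hlam1
    have hqi0 : q i0 = lam * qs i0 := by
      rw [if_pos hqs_pos] at hi0'
      rw [hi0']
      field_simp
    have hPi0 : P i0 ≠ 0 := by
      intro h
      have hc0 : cfun A P qs i0 ≤ 0 := by
        rw [cfun_image]
        apply Real.sSup_le _ le_rfl
        rintro y ⟨x, _, rfl⟩
        simp [h]
      have hd0 : dvec F g P i0 ≤ 0 := by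
        unfold dvec suppFn
        apply Real.sSup_le _ le_rfl
        rintro y ⟨x, _, rfl⟩
        simp [h]
      linarith [hfixpt i0, hqs_pos]
    have hd : 0 < dvec F g P i0 := dvec_pos hg hWcompact hPi0
    -- c(q) i0 ≥ lam * c(qs) i0
    have hcq_nonneg : 0 ≤ cfun A P q i0 := cfun_nonneg A hP0 hq0 i0
    have hc : lam * cfun A P qs i0 ≤ cfun A P q i0 := by
      rcases eq_or_lt_of_le hlam0 with h0 | h0
      · rw [← h0, zero_mul]; exact hcq_nonneg
      · have hmem : ∀ x ∈ Rset P qs, lam • x ∈ Rset P q := by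
          intro x hx i
          rw [Matrix.mulVec_smul, Pi.smul_apply, smul_eq_mul]
          calc lam * P.mulVec x i ≤ lam * qs i :=
                mul_le_mul_of_nonneg_left (hx i) hlam0
            _ ≤ q i := hlamq i
        have hle2 : cfun A P qs i0 ≤ cfun A P q i0 / lam := by
          rw [cfun_image]
          apply Real.sSup_le _ (div_nonneg hcq_nonneg hlam0)
          rintro y ⟨x, hx, rfl⟩
          rw [le_div_iff₀ h0]
          have hmem2 : lam * (P i0 ⬝ᵥ A.mulVec x) ∈
              (fun x => P i0 ⬝ᵥ A.mulVec x) '' Rset P q := by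
            refine ⟨lam • x, hmem x hx, ?_⟩
            show P i0 ⬝ᵥ A.mulVec (lam • x) = _
            rw [Matrix.mulVec_smul, dotProduct_smul, smul_eq_mul]
          calc (P i0 ⬝ᵥ A.mulVec x) * lam = lam * (P i0 ⬝ᵥ A.mulVec x) := mul_comm _ _
            _ ≤ cfun A P q i0 := by
                rw [cfun_image]
                exact le_csSup (bddAbove_cimage A hP0 q i0) hmem2
        calc lam * cfun A P qs i0 ≤ lam * (cfun A P q i0 / lam) :=
              mul_le_mul_of_nonneg_left hle2 hlam0
          _ = cfun A P q i0 := by field_simp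
    have hq' : cfun A P q i0 + dvec F g P i0 ≤ q i0 := by
      have h1 := hS i0
      have h2 := bfun_le P hq0 i0
      simp only [Pi.add_apply] at h1
      linarith
    nlinarith [hfixpt i0, hqi0, hlamq i0]

/-- if `q*` is a nonnegative fixed point of `c(q) + d = b(q) = q`, then
`R(q*)` is the intersection of the family `{R(q) : q ≥ 0, c(q) + d ≤ b(q)}`. -/
theorem fixedPoint_Rset_eq_iInter
    (n r p : ℕ)
    (A : Matrix (Fin n) (Fin n) ℝ)
    (F : Matrix (Fin p) (Fin n) ℝ) (g : Fin p → ℝ)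
    (hg : ∀ j, 0 < g j)
    (hWcompact : IsCompact {w : Fin n → ℝ | F.mulVec w ≤ g})
    (P : Matrix (Fin r) (Fin n) ℝ)
    (hspan : Submodule.span ℝ (Set.range fun i => P i) = ⊤)
    (hP0 : {z : Fin n → ℝ | P.mulVec z ≤ 0} = {0})
    (qs : Fin r → ℝ) (hqs : 0 ≤ qs)
    (hfix : cfun A P qs + dvec F g P = bfun P qs ∧ bfun P qs = qs) :
    Rset P qs =
      ⋂ q ∈ {q : Fin r → ℝ | 0 ≤ q ∧ cfun A P q + dvec F g P ≤ bfun P q}, Rset P q := by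
  ext x
  simp only [Set.mem_iInter, Set.mem_setOf_eq]
  constructor
  · intro hx qq hqq
    obtain ⟨hq0, hSq⟩ := hqq
    have hle : qs ≤ qq := key_le A F g hg hWcompact P hP0 qs hqs hfix qq hq0 hSq
    intro i
    have h1 : P i ⬝ᵥ x ≤ bfun P qs i :=
      le_csSup (bddAbove_dot_image (isCompact_Rset hP0 qs) (P i)) ⟨x, hx, rfl⟩
    have h2 : bfun P qs i = qs i := congrFun hfix.2 i
    calc P.mulVec x i = P i ⬝ᵥ x := rfl
      _ ≤ qs i := h2 ▸ h1
      _ ≤ qq i := hle i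
  · intro hx
    exact hx qs ⟨hqs, le_of_eq hfix.1⟩
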